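/- Let R be a topological ring with identity and let 𝓘 be a family of closed two-sided ideals of R that are pairwise topologically co-maximal and satisfy: for every neighborhood ε of 0, the set of I ∈ 𝓘 with I + ε ≠ R is finite. On the ring Π = ∏_{I ∈ 𝓘} R/I define, for each neighborhood ε of 0 in R, the set U(ε) = {(a_I + I)_{I ∈ 𝓘} : a_I ∈ I + ε for all I ∈ 𝓘}. Then the family {U(ε)}_{ε ∈ N(0)} is a fundamental system of neighborhoods of 0 for a Hausdorff ring topology on Π. -/

import Mathlib

open Pointwise Topology

section Aux

variable {R : Type*} [Ring R] [TopologicalSpace R] [IsTopologicalRing R]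

namespace TCMAux

/-- The quotient topology on `R ⧸ I`. -/
def qtop (I : TwoSidedIdeal R) : TopologicalSpace I.ringCon.Quotient :=
  TopologicalSpace.coinduced ⇑I.ringCon.mk' inferInstance

variable (I : TwoSidedIdeal R)

lemma mk'_surjective : Function.Surjective ⇑I.ringCon.mk' :=
  fun x => Quotient.inductionOn' x fun a => ⟨a, rfl⟩

lemma continuous_mk' : @Continuous _ _ _ (qtop I) ⇑I.ringCon.mk' :=
  continuous_coinduced_rng

lemma mk'_eq_iff (a b : R) : I.ringCon.mk' a = I.ringCon.mk' b ↔ a - b ∈ I := by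
  rw [show I.ringCon.mk' a = (a : I.ringCon.Quotient) from rfl,
    show I.ringCon.mk' b = (b : I.ringCon.Quotient) from rfl, RingCon.eq, I.rel_iff]

lemma isOpen_qtop {s : Set I.ringCon.Quotient} :
    IsOpen[qtop I] s ↔ IsOpen (⇑I.ringCon.mk' ⁻¹' s) :=
  isOpen_coinduced

lemma isOpenMap_mk' : @IsOpenMap _ _ _ (qtop I) ⇑I.ringCon.mk' := by
  intro U hU
  rw [isOpen_qtop]
  have key : ⇑I.ringCon.mk' ⁻¹' (⇑I.ringCon.mk' '' U) = ⋃ i ∈ (I : Set R), (· + i) '' U := by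
    ext x
    simp only [Set.mem_preimage, Set.mem_image, Set.mem_iUnion, SetLike.mem_coe]
    constructor
    · rintro ⟨u, hu, heq⟩
      have h1 : u - x ∈ I := (mk'_eq_iff I u x).1 heq
      have h2 : x - u ∈ I := by
        rw [show x - u = -(u - x) by abel]; exact I.neg_mem h1
      exact ⟨x - u, h2, u, hu, by abel⟩
    · rintro ⟨i, hi, u, hu, rfl⟩
      refine ⟨u, hu, (mk'_eq_iff I u (u + i)).2 ?_⟩
      rw [show u - (u + i) = -i by abel]; exact I.neg_mem hi
  rw [key]
  exact isOpen_biUnion fun i _ => (isOpenMap_add_right i) U hU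

lemma isQuotientMap_mk' : @IsQuotientMap _ _ _ (qtop I) ⇑I.ringCon.mk' :=
  letI := qtop I
  (isOpenMap_mk' I).isQuotientMap (continuous_mk' I) (mk'_surjective I)

lemma topRing : @IsTopologicalRing _ (qtop I) _ := by
  letI := qtop I
  have hq2 : IsQuotientMap (Prod.map ⇑I.ringCon.mk' ⇑I.ringCon.mk') :=
    ((isOpenMap_mk' I).prodMap (isOpenMap_mk' I)).isQuotientMap
      ((continuous_mk' I).prodMap (continuous_mk' I))
      ((mk'_surjective I).prodMap (mk'_surjective I))
  haveI : ContinuousAdd I.ringCon.Quotient := by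
    refine ⟨?_⟩
    rw [hq2.continuous_iff]
    show Continuous fun p : R × R => I.ringCon.mk' (p.1 + p.2)
    exact (continuous_mk' I).comp continuous_add
  haveI : ContinuousMul I.ringCon.Quotient := by
    refine ⟨?_⟩
    rw [hq2.continuous_iff]
    show Continuous fun p : R × R => I.ringCon.mk' (p.1 * p.2)
    exact (continuous_mk' I).comp continuous_mul
  haveI : ContinuousNeg I.ringCon.Quotient := by
    refine ⟨?_⟩
    rw [(isQuotientMap_mk' I).continuous_iff]
    show Continuous fun a : R => I.ringCon.mk' (-a)
    exact (continuous_mk' I).comp continuous_neg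
  haveI : IsTopologicalSemiring I.ringCon.Quotient := ⟨⟩
  exact ⟨⟩

lemma t2 (h : IsClosed (I : Set R)) : @T2Space _ (qtop I) := by
  letI := qtop I
  haveI := topRing I
  have hpre : ⇑I.ringCon.mk' ⁻¹' ({(0 : I.ringCon.Quotient)} : Set _) = (I : Set R) := by
    ext x
    simp only [Set.mem_preimage, Set.mem_singleton_iff, SetLike.mem_coe]
    rw [show (0 : I.ringCon.Quotient) = I.ringCon.mk' 0 from rfl, mk'_eq_iff, sub_zero]
  have hc : IsClosed ({(0 : I.ringCon.Quotient)} : Set _) := by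
    rw [← isOpen_compl_iff, isOpen_qtop, Set.preimage_compl, hpre]
    exact h.isOpen_compl
  exact IsTopologicalAddGroup.t2Space_iff_zero_closed.2 hc

lemma nhds_zero : @nhds _ (qtop I) 0 = Filter.map ⇑I.ringCon.mk' (nhds (0 : R)) := by
  letI := qtop I
  refine le_antisymm ?_ ?_
  · simpa using (isOpenMap_mk' I).nhds_le (0 : R)
  · simpa [Filter.Tendsto] using ((continuous_mk' I).tendsto (0 : R))

end TCMAux

end Aux

/-- Let `𝓘` be a family of closed two-sided ideals of a topological ring `R`, pairwise
topologically co-maximal, such that for every neighborhood `ε` of `0` only finitely many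
`I ∈ 𝓘` fail to satisfy `I + ε = R`. Then on `Π = ∏_{I ∈ 𝓘} R/I` the sets
`U(ε) = {(a_I + I)_I : a_I ∈ I + ε for all I}`, for `ε` a neighborhood of `0` in `R`, form a
fundamental system of neighborhoods of `0` for a Hausdorff ring topology. -/
theorem product_topology_fundamental_system {R : Type*} [Ring R] [TopologicalSpace R]
    [IsTopologicalRing R] [T2Space R] (𝓘 : Set (TwoSidedIdeal R))
    (hclosed : ∀ I ∈ 𝓘, IsClosed (I : Set R))
    (hTCM : 𝓘.Pairwise fun I J => closure ((I : Set R) + (J : Set R)) = Set.univ)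
    (hfin : ∀ ε ∈ nhds (0 : R), {I ∈ 𝓘 | (I : Set R) + ε ≠ Set.univ}.Finite) :
    ∃ t : TopologicalSpace (∀ I : 𝓘, (I : TwoSidedIdeal R).ringCon.Quotient),
      @IsTopologicalRing _ t _ ∧ @T2Space _ t ∧
      (@nhds _ t 0).HasBasis (fun ε : Set R => ε ∈ nhds (0 : R))
        (fun ε => {x : ∀ I : 𝓘, (I : TwoSidedIdeal R).ringCon.Quotient |
          ∀ I : 𝓘, ∃ a ∈ ((I : TwoSidedIdeal R) : Set R) + ε, (I : TwoSidedIdeal R).ringCon.mk' a = x I}) := by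
  letI tq : ∀ I : 𝓘, TopologicalSpace (I : TwoSidedIdeal R).ringCon.Quotient :=
    fun I => TCMAux.qtop (I : TwoSidedIdeal R)
  haveI hTR : ∀ I : 𝓘, IsTopologicalRing (I : TwoSidedIdeal R).ringCon.Quotient :=
    fun I => TCMAux.topRing (I : TwoSidedIdeal R)
  haveI hT2 : ∀ I : 𝓘, T2Space (I : TwoSidedIdeal R).ringCon.Quotient :=
    fun I => TCMAux.t2 (I : TwoSidedIdeal R) (hclosed I I.2)
  refine ⟨Pi.topologicalSpace, inferInstance, inferInstance, ?_⟩
  rw [Filter.hasBasis_iff]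
  intro t
  constructor
  · -- if t ∈ 𝓝 0 then some U(ε) ⊆ t
    intro ht
    rw [nhds_pi, Filter.mem_pi] at ht
    obtain ⟨F, hFfin, V, hV, hVt⟩ := ht
    have hVmem : ∀ i : 𝓘, (⇑(i : TwoSidedIdeal R).ringCon.mk' ⁻¹' V i) ∈ nhds (0 : R) := by
      intro i
      have h0 : V i ∈ @nhds _ (tq i) (0 : (i : TwoSidedIdeal R).ringCon.Quotient) := hV i
      rw [TCMAux.nhds_zero] at h0
      exact h0
    refine ⟨⋂ i ∈ F, ⇑(i : TwoSidedIdeal R).ringCon.mk' ⁻¹' V i,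
      (Filter.biInter_mem hFfin).2 fun i _ => hVmem i, ?_⟩
    intro x hx
    refine hVt fun i hi => ?_
    obtain ⟨a, ha, hax⟩ := hx i
    rw [Set.mem_add] at ha
    obtain ⟨j, hj, e, he, rfl⟩ := ha
    have hee : e ∈ ⇑(i : TwoSidedIdeal R).ringCon.mk' ⁻¹' V i := by
      have := Set.mem_iInter₂.1 he i hi
      exact this
    have : (i : TwoSidedIdeal R).ringCon.mk' (j + e) = (i : TwoSidedIdeal R).ringCon.mk' e := by
      rw [TCMAux.mk'_eq_iff]
      rw [show j + e - e = j by abel]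
      exact hj
    rw [← hax, this]
    exact hee
  · -- every U(ε) is a neighborhood of 0
    rintro ⟨ε, hε, hsub⟩
    refine Filter.mem_of_superset ?_ hsub
    set S : Set 𝓘 := {i : 𝓘 | ((i : TwoSidedIdeal R) : Set R) + ε ≠ Set.univ} with hS
    have hSfin : S.Finite := by
      have h1 := hfin ε hε
      have : S ⊆ (fun i : 𝓘 => (i : TwoSidedIdeal R)) ⁻¹' {I ∈ 𝓘 | (I : Set R) + ε ≠ Set.univ} := by
        intro i hi
        exact ⟨i.2, hi⟩
      exact Set.Finite.subset (Set.Finite.preimage (Subtype.val_injective.injOn) h1) this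
    have hmem : (⋂ i ∈ S, (fun x : ∀ I : 𝓘, (I : TwoSidedIdeal R).ringCon.Quotient => x i) ⁻¹'
        (⇑(i : TwoSidedIdeal R).ringCon.mk' '' ε)) ∈ @nhds _ Pi.topologicalSpace
          (0 : ∀ I : 𝓘, (I : TwoSidedIdeal R).ringCon.Quotient) := by
      refine (Filter.biInter_mem hSfin).2 fun i _ => ?_
      refine ContinuousAt.preimage_mem_nhds (continuous_apply (i : 𝓘)).continuousAt ?_
      have : ⇑(i : TwoSidedIdeal R).ringCon.mk' '' ε
          ∈ @nhds _ (tq i) (0 : (i : TwoSidedIdeal R).ringCon.Quotient) := by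
        rw [TCMAux.nhds_zero]
        exact Filter.image_mem_map hε
      exact this
    refine Filter.mem_of_superset hmem ?_
    intro x hx i
    by_cases hi : i ∈ S
    · have := Set.mem_iInter₂.1 hx i hi
      obtain ⟨e, he, hex⟩ := this
      refine ⟨e, ?_, hex⟩
      rw [Set.mem_add]
      exact ⟨0, (i : TwoSidedIdeal R).zero_mem, e, he, zero_add e⟩
    · have huniv : ((i : TwoSidedIdeal R) : Set R) + ε = Set.univ := by
        by_contra h
        exact hi h
      obtain ⟨a, ha⟩ := TCMAux.mk'_surjective (i : TwoSidedIdeal R) (x i)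
      exact ⟨a, huniv ▸ Set.mem_univ a, ha⟩
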